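/- Let G be a strongly connected simple digraph on n vertices and 1/2 < α < 1. Then μ_α(G) = max_i (α D_i + (1-α) T_i / D_i) (equivalently, equality holds in the upper bound of the row-sum estimate) if and only if G is distance regular, i.e., all vertex transmissions are equal. -/

import Mathlib

open Matrix BigOperators

/-- Spectral radius of a real square matrix: the largest modulus of its complex eigenvalues. -/
noncomputable def specRad {n : ℕ} (M : Matrix (Fin n) (Fin n) ℝ) : ℝ :=
  sSup {r : ℝ | ∃ μ ∈ spectrum ℂ (M.map (fun x => (x : ℂ))), r = ‖μ‖}

/-- A matrix is irreducible iff its associated digraph is strongly connected. -/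
def Irred {n : ℕ} (M : Matrix (Fin n) (Fin n) ℝ) : Prop :=
  ∀ i j : Fin n, Relation.ReflTransGen (fun a b => M a b ≠ 0) i j

/-- A directed walk of length `k` from `i` to `j` in a digraph. -/
def DWalk {n : ℕ} (G : Digraph (Fin n)) (i j : Fin n) (k : ℕ) : Prop :=
  ∃ f : ℕ → Fin n, f 0 = i ∧ f k = j ∧ ∀ l < k, G.Adj (f l) (f (l + 1))

/-- A digraph is strongly connected iff every vertex can reach every vertex. -/
def SConn {n : ℕ} (G : Digraph (Fin n)) : Prop :=
  ∀ i j : Fin n, ∃ k : ℕ, DWalk G i j k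

/-- A simple digraph has no loops. -/
def Loopless {n : ℕ} (G : Digraph (Fin n)) : Prop := ∀ i : Fin n, ¬ G.Adj i i

/-- Directed distance from `i` to `j`. -/
noncomputable def ddist {n : ℕ} (G : Digraph (Fin n)) (i j : Fin n) : ℕ :=
  sInf {k : ℕ | DWalk G i j k}

/-- Transmission of vertex `i`: sum of distances from `i` to all vertices. -/
noncomputable def transm {n : ℕ} (G : Digraph (Fin n)) (i : Fin n) : ℝ :=
  ∑ j : Fin n, (ddist G i j : ℝ)

/-- The generalized distance matrix `D_α(G) = α·Diag(Tr) + (1-α)·D(G)`. -/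
noncomputable def Dalpha {n : ℕ} (α : ℝ) (G : Digraph (Fin n)) : Matrix (Fin n) (Fin n) ℝ :=
  α • Matrix.diagonal (transm G) + (1 - α) • (Matrix.of fun i j => (ddist G i j : ℝ))

/-- The `D_α` spectral radius of a digraph. -/
noncomputable def mualpha {n : ℕ} (α : ℝ) (G : Digraph (Fin n)) : ℝ :=
  specRad (Dalpha α G)

/-- Isomorphism of digraphs on `Fin n`. -/
def IsoD {n : ℕ} (G H : Digraph (Fin n)) : Prop :=
  ∃ e : Fin n ≃ Fin n, ∀ i j : Fin n, G.Adj i j ↔ H.Adj (e i) (e j)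

/-- The digraph `K(n,k,m)`: vertices `0..k-1` form `K↔ₖ`, `k..k+m-1` form `K↔ₘ`,
`k+m..n-1` form `K↔_{n-k-m}`; all arcs present except those from `K↔_{n-k-m}` to `K↔ₘ`. -/
def KD (n k m : ℕ) : Digraph (Fin n) :=
  ⟨fun i j => i ≠ j ∧ ¬(k + m ≤ (i : ℕ) ∧ k ≤ (j : ℕ) ∧ (j : ℕ) < k + m)⟩

/-- A directed walk staying inside a vertex set `A`. -/
def DWalkIn {n : ℕ} (G : Digraph (Fin n)) (A : Set (Fin n)) (i j : Fin n) (k : ℕ) : Prop :=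
  ∃ f : ℕ → Fin n, f 0 = i ∧ f k = j ∧ (∀ l ≤ k, f l ∈ A) ∧ ∀ l < k, G.Adj (f l) (f (l + 1))

/-- The induced subdigraph on `A` is strongly connected. -/
def SCOn {n : ℕ} (G : Digraph (Fin n)) (A : Set (Fin n)) : Prop :=
  ∀ i ∈ A, ∀ j ∈ A, ∃ k : ℕ, DWalkIn G A i j k

/- ### Auxiliary lemmas -/

lemma spec_iff_eigen {n : ℕ} (A : Matrix (Fin n) (Fin n) ℂ) (μ : ℂ) :
    μ ∈ spectrum ℂ A ↔ ∃ v : Fin n → ℂ, v ≠ 0 ∧ A.mulVec v = μ • v := by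
  rw [← AlgEquiv.spectrum_eq Matrix.toLinAlgEquiv' A, ← Module.End.hasEigenvalue_iff_mem_spectrum,
    Module.End.hasEigenvalue_iff, Submodule.ne_bot_iff]
  constructor
  · rintro ⟨v, hv, hv0⟩
    refine ⟨v, hv0, ?_⟩
    have := Module.End.mem_eigenspace_iff.mp hv
    simpa [Matrix.toLinAlgEquiv'_apply] using this
  · rintro ⟨v, hv0, hv⟩
    refine ⟨v, Module.End.mem_eigenspace_iff.mpr ?_, hv0⟩
    simpa [Matrix.toLinAlgEquiv'_apply] using hv

lemma spec_finite {n : ℕ} (A : Matrix (Fin n) (Fin n) ℂ) : (spectrum ℂ A).Finite := by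
  rw [← AlgEquiv.spectrum_eq Matrix.toLinAlgEquiv' A]
  have h := Module.End.finite_hasEigenvalue (Matrix.toLinAlgEquiv' A)
  refine h.subset ?_
  intro μ hμ
  exact Module.End.hasEigenvalue_iff_mem_spectrum.mpr hμ

lemma spec_nonempty {n : ℕ} (hn : 0 < n) (A : Matrix (Fin n) (Fin n) ℂ) :
    (spectrum ℂ A).Nonempty := by
  rw [← AlgEquiv.spectrum_eq Matrix.toLinAlgEquiv' A]
  have : Nontrivial (Fin n → ℂ) := by
    have : Nonempty (Fin n) := ⟨⟨0, hn⟩⟩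
    infer_instance
  obtain ⟨μ, hμ⟩ := Module.End.exists_eigenvalue (Matrix.toLinAlgEquiv' A)
  exact ⟨μ, Module.End.hasEigenvalue_iff_mem_spectrum.mp hμ⟩

lemma key_bound {n : ℕ} (hn : 0 < n) (M : Matrix (Fin n) (Fin n) ℝ) (T s : Fin n → ℝ)
    (hT : ∀ i, 0 < T i) (hM : ∀ i j, 0 ≤ M i j) (hMpos : ∀ i j, i ≠ j → 0 < M i j)
    (hrow : ∀ i, ∑ j, M i j * T j = T i * s i)
    {μ : ℂ} (hμ : μ ∈ spectrum ℂ (M.map (fun x => (x : ℂ)))) :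
    ‖μ‖ ≤ ⨆ i, s i ∧
      (‖μ‖ = ⨆ i, s i → ∀ i, s i = ⨆ j, s j) := by
  have : Nonempty (Fin n) := ⟨⟨0, hn⟩⟩
  obtain ⟨v, hv0, hveq⟩ := (spec_iff_eigen _ μ).mp hμ
  set y : Fin n → ℝ := fun i => ‖v i‖ / T i with hy
  have hy0 : ∀ i, 0 ≤ y i := fun i => div_nonneg (norm_nonneg _) (hT i).le
  obtain ⟨i0, hi0⟩ := Finite.exists_max y
  have hm : 0 < y i0 := by
    obtain ⟨j, hj⟩ := Function.ne_iff.mp hv0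
    exact lt_of_lt_of_le (div_pos (norm_pos_iff.mpr hj) (hT j)) (hi0 j)
  have hTy : ∀ i, T i * y i = ‖v i‖ := by
    intro i; simp only [hy]; rw [mul_comm, div_mul_cancel₀ _ (hT i).ne']
  have hent : ∀ i, μ * v i = ∑ j, ((M i j : ℝ) : ℂ) * v j := by
    intro i
    have := congrFun hveq i
    simp only [Matrix.mulVec, dotProduct, Matrix.map_apply, Pi.smul_apply, smul_eq_mul] at this
    exact this.symm
  have habs : ∀ i, ‖μ‖ * (T i * y i) ≤ ∑ j, M i j * (T j * y j) := by
    intro i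
    rw [hTy i]
    calc ‖μ‖ * ‖v i‖ = ‖μ * v i‖ := (norm_mul _ _).symm
      _ = ‖∑ j, ((M i j : ℝ) : ℂ) * v j‖ := by rw [hent i]
      _ ≤ ∑ j, ‖((M i j : ℝ) : ℂ) * v j‖ := norm_sum_le _ _
      _ = ∑ j, M i j * (T j * y j) := by
          refine Finset.sum_congr rfl fun j _ => ?_
          rw [norm_mul, Complex.norm_real, Real.norm_eq_abs, abs_of_nonneg (hM i j), hTy j]
  have hsum_eq : ∀ i, ∑ j, M i j * (T j * y i0) = y i0 * (T i * s i) := by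
    intro i
    rw [← hrow i, Finset.mul_sum]
    exact Finset.sum_congr rfl fun j _ => by ring
  have hsum_le : ∀ i, ∑ j, M i j * (T j * y j) ≤ y i0 * (T i * s i) := by
    intro i
    rw [← hsum_eq i]
    refine Finset.sum_le_sum fun j _ => ?_
    exact mul_le_mul_of_nonneg_left (mul_le_mul_of_nonneg_left (hi0 j) (hT j).le) (hM i j)
  have hboundS : ∀ i, s i ≤ ⨆ j, s j :=
    fun i => le_ciSup (Set.Finite.bddAbove (Set.finite_range s)) i
  have hμle : ‖μ‖ ≤ s i0 := by
    have h := (habs i0).trans (hsum_le i0)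
    have hpos : 0 < T i0 * y i0 := mul_pos (hT i0) hm
    nlinarith
  refine ⟨hμle.trans (hboundS i0), ?_⟩
  intro hEq i
  set S := ⨆ j, s j with hS
  have heq1 : ∑ j, M i0 j * (T j * (y i0 - y j)) = 0 := by
    have l1 := habs i0
    rw [hEq] at l1
    have l2 : y i0 * (T i0 * s i0) ≤ S * (T i0 * y i0) := by
      have h := mul_le_mul_of_nonneg_left (hboundS i0) (mul_nonneg (hT i0).le hm.le)
      nlinarith [h]
    have l3 : ∑ j, M i0 j * (T j * (y i0 - y j))
        = ∑ j, M i0 j * (T j * y i0) - ∑ j, M i0 j * (T j * y j) := by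
      rw [← Finset.sum_sub_distrib]
      exact Finset.sum_congr rfl fun j _ => by ring
    have l4 : ∑ j, M i0 j * (T j * y j) ≤ ∑ j, M i0 j * (T j * y i0) := by
      rw [hsum_eq i0]; exact hsum_le i0
    have l5 : ∑ j, M i0 j * (T j * y i0) ≤ ∑ j, M i0 j * (T j * y j) := by
      rw [hsum_eq i0]; linarith
    linarith
  have hyconst : ∀ j, y j = y i0 := by
    intro j
    rcases eq_or_ne j i0 with rfl | hne
    · rfl
    · have hterm := (Finset.sum_eq_zero_iff_of_nonneg (fun t _ =>
        mul_nonneg (hM i0 t) (mul_nonneg (hT t).le (sub_nonneg.mpr (hi0 t))))).mp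
          heq1 j (Finset.mem_univ j)
      have hMp := hMpos i0 j (Ne.symm hne)
      have hTp := hT j
      have : y i0 - y j = 0 := by
        by_contra hne2
        exact (mul_ne_zero (ne_of_gt hMp) (mul_ne_zero (ne_of_gt hTp) hne2)) hterm
      linarith
  have h1 := habs i
  have h2 : ∑ j, M i j * (T j * y j) = y i0 * (T i * s i) := by
    rw [← hsum_eq i]
    exact Finset.sum_congr rfl fun j _ => by rw [hyconst j]
  rw [hEq, hyconst i, h2] at h1
  have hpos : 0 < T i * y i0 := mul_pos (hT i) hm
  have : S ≤ s i := by nlinarith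
  exact le_antisymm (hboundS i) this

lemma ddist_self' {n : ℕ} (G : Digraph (Fin n)) (i : Fin n) : ddist G i i = 0 :=
  Nat.sInf_eq_zero.mpr (Or.inl ⟨fun _ => i, rfl, rfl, fun l hl => absurd hl (Nat.not_lt_zero l)⟩)

lemma one_le_ddist' {n : ℕ} {G : Digraph (Fin n)} (hsc : SConn G) {i j : Fin n} (h : i ≠ j) :
    1 ≤ ddist G i j := by
  rcases hsc i j with ⟨k, hk⟩
  have hne : {k : ℕ | DWalk G i j k}.Nonempty := ⟨k, hk⟩
  by_contra hlt
  push_neg at hlt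
  have h0 : ddist G i j = 0 := Nat.lt_one_iff.mp hlt
  have hmem := Nat.sInf_mem hne
  rw [show sInf {k | DWalk G i j k} = ddist G i j from rfl, h0] at hmem
  obtain ⟨f, hf0, hfk, _⟩ := hmem
  exact h (hf0.symm.trans hfk)

lemma transm_pos' {n : ℕ} (hn : 2 ≤ n) {G : Digraph (Fin n)} (hsc : SConn G) (i : Fin n) :
    0 < transm G i := by
  obtain ⟨j, hj⟩ : ∃ j : Fin n, j ≠ i := by
    have hcard : 1 < Fintype.card (Fin n) := by simp; omega
    exact Fintype.exists_ne_of_one_lt_card hcard i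
  have h1 : (1:ℝ) ≤ (ddist G i j : ℝ) := by exact_mod_cast one_le_ddist' hsc (Ne.symm hj)
  have h2 : (ddist G i j : ℝ) ≤ transm G i := by
    unfold transm
    exact Finset.single_le_sum (f := fun t => ((ddist G i t : ℝ)))
      (fun t _ => by positivity) (Finset.mem_univ j)
  linarith

theorem stmt4 {n : ℕ} (hn : 2 ≤ n) (G : Digraph (Fin n)) (hG : Loopless G) (hsc : SConn G)
    (α : ℝ) (h0 : 1 / 2 < α) (h1 : α < 1) :
    mualpha α G = (⨆ i : Fin n, (α * transm G i +
        (1 - α) * (∑ t : Fin n, (ddist G i t : ℝ) * transm G t) / transm G i)) ↔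
      ∀ i j : Fin n, transm G i = transm G j := by
  have hn0 : 0 < n := by omega
  have hNE : Nonempty (Fin n) := ⟨⟨0, hn0⟩⟩
  have hα0 : 0 < α := by linarith
  have hα1 : 0 < 1 - α := by linarith
  let s : Fin n → ℝ := fun i => α * transm G i +
      (1 - α) * (∑ t : Fin n, (ddist G i t : ℝ) * transm G t) / transm G i
  have hs : ∀ i, s i = α * transm G i +
      (1 - α) * (∑ t : Fin n, (ddist G i t : ℝ) * transm G t) / transm G i := fun _ => rfl
  show mualpha α G = (⨆ i, s i) ↔ ∀ i j : Fin n, transm G i = transm G j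
  have hT : ∀ i, 0 < transm G i := transm_pos' hn hsc
  have hMapply : ∀ i j, Dalpha α G i j
      = α * (if i = j then transm G i else 0) + (1 - α) * (ddist G i j : ℝ) := by
    intro i j
    simp [Dalpha, Matrix.diagonal_apply]
  have hM : ∀ i j, 0 ≤ Dalpha α G i j := by
    intro i j
    rw [hMapply i j]
    have : (0:ℝ) ≤ (if i = j then transm G i else 0) := by
      split <;> simp [le_of_lt, hT]
    positivity
  have hMpos : ∀ i j, i ≠ j → 0 < Dalpha α G i j := by
    intro i j hij
    rw [hMapply i j, if_neg hij]
    have : (1:ℝ) ≤ (ddist G i j : ℝ) := by exact_mod_cast one_le_ddist' hsc hij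
    nlinarith
  have hdiagsum : ∀ i, ∑ j, (if i = j then transm G i else 0) * transm G j
      = transm G i * transm G i := by
    intro i
    rw [Finset.sum_eq_single i]
    · simp
    · intro b _ hb; rw [if_neg (Ne.symm hb), zero_mul]
    · intro hb; exact absurd (Finset.mem_univ i) hb
  have hrow : ∀ i, ∑ j, Dalpha α G i j * transm G j = transm G i * s i := by
    intro i
    have step : ∑ j, Dalpha α G i j * transm G j
        = ∑ j, (α * ((if i = j then transm G i else 0) * transm G j)
            + (1 - α) * ((ddist G i j : ℝ) * transm G j)) :=
      Finset.sum_congr rfl fun j _ => by rw [hMapply i j]; ring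
    rw [step, Finset.sum_add_distrib, ← Finset.mul_sum, ← Finset.mul_sum, hdiagsum i, hs i]
    have hTne := (hT i).ne'
    field_simp
  have hrowsum : ∀ i, ∑ j, Dalpha α G i j = transm G i := by
    intro i
    have step : ∑ j, Dalpha α G i j
        = ∑ j, (α * (if i = j then transm G i else 0) + (1 - α) * (ddist G i j : ℝ)) :=
      Finset.sum_congr rfl fun j _ => hMapply i j
    rw [step, Finset.sum_add_distrib, ← Finset.mul_sum, ← Finset.mul_sum]
    have e2 : ∑ j, (if i = j then transm G i else 0) = transm G i := by
      rw [Finset.sum_eq_single i]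
      · simp
      · intro b _ hb; rw [if_neg (Ne.symm hb)]
      · intro hb; exact absurd (Finset.mem_univ i) hb
    have e3 : ∑ j, (ddist G i j : ℝ) = transm G i := rfl
    rw [e2, e3]; ring
  have hbS : ∀ i, s i ≤ ⨆ j, s j :=
    fun i => le_ciSup (Set.Finite.bddAbove (Set.finite_range s)) i
  constructor
  · -- equality implies transmission regular
    intro heq i j
    set A := (Dalpha α G).map (fun x => (x : ℂ)) with hA
    have himg : {x : ℝ | ∃ μ ∈ spectrum ℂ A, x = ‖μ‖}
        = (fun μ : ℂ => ‖μ‖) '' spectrum ℂ A := by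
      ext x
      simp only [Set.mem_setOf_eq, Set.mem_image]
      constructor
      · rintro ⟨μ, hμ, rfl⟩; exact ⟨μ, hμ, rfl⟩
      · rintro ⟨μ, hμ, rfl⟩; exact ⟨μ, hμ, rfl⟩
    have hfin : {x : ℝ | ∃ μ ∈ spectrum ℂ A, x = ‖μ‖}.Finite := by
      rw [himg]; exact (spec_finite A).image _
    have hne : {x : ℝ | ∃ μ ∈ spectrum ℂ A, x = ‖μ‖}.Nonempty := by
      obtain ⟨μ0, hμ0⟩ := spec_nonempty hn0 A
      exact ⟨‖μ0‖, μ0, hμ0, rfl⟩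
    obtain ⟨μ, hμ, hμabs⟩ := Set.Nonempty.csSup_mem hne hfin
    have hμeq : ‖μ‖ = ⨆ k, s k := by
      rw [← hμabs]
      exact heq
    have hall := (key_bound hn0 (Dalpha α G) (transm G) s hT hM hMpos hrow hμ).2 hμeq
    -- arithmetic: all row quantities equal forces transmission regular
    obtain ⟨p, hp⟩ := Finite.exists_max (transm G)
    obtain ⟨q, hq⟩ := Finite.exists_min (transm G)
    have hspq : s p = s q := by rw [hall p, hall q]
    have ha := hT p
    have hb := hT q
    have hXp : transm G q * transm G p ≤ ∑ t, (ddist G p t : ℝ) * transm G t := by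
      have e : ∑ t, (ddist G p t : ℝ) * transm G q = transm G p * transm G q := by
        rw [← Finset.sum_mul]
        rfl
      have : ∑ t, (ddist G p t : ℝ) * transm G q ≤ ∑ t, (ddist G p t : ℝ) * transm G t :=
        Finset.sum_le_sum fun t _ => mul_le_mul_of_nonneg_left (hq t) (by positivity)
      linarith [this, e.symm.le]
    have hXq : ∑ t, (ddist G q t : ℝ) * transm G t ≤ transm G p * transm G q := by
      have e : ∑ t, (ddist G q t : ℝ) * transm G p = transm G q * transm G p := by
        rw [← Finset.sum_mul]
        rfl
      have : ∑ t, (ddist G q t : ℝ) * transm G t ≤ ∑ t, (ddist G q t : ℝ) * transm G p :=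
        Finset.sum_le_sum fun t _ => mul_le_mul_of_nonneg_left (hp t) (by positivity)
      linarith [this, e.le]
    have e1 : transm G p * s p
        = α * (transm G p * transm G p) + (1 - α) * ∑ t, (ddist G p t : ℝ) * transm G t := by
      rw [← hrow p]
      have step : ∑ j_1, Dalpha α G p j_1 * transm G j_1
          = ∑ j_1, (α * ((if p = j_1 then transm G p else 0) * transm G j_1)
              + (1 - α) * ((ddist G p j_1 : ℝ) * transm G j_1)) :=
        Finset.sum_congr rfl fun t _ => by rw [hMapply p t]; ring
      rw [step, Finset.sum_add_distrib, ← Finset.mul_sum, ← Finset.mul_sum, hdiagsum p]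
    have e2 : transm G q * s q
        = α * (transm G q * transm G q) + (1 - α) * ∑ t, (ddist G q t : ℝ) * transm G t := by
      rw [← hrow q]
      have step : ∑ j_1, Dalpha α G q j_1 * transm G j_1
          = ∑ j_1, (α * ((if q = j_1 then transm G q else 0) * transm G j_1)
              + (1 - α) * ((ddist G q j_1 : ℝ) * transm G j_1)) :=
        Finset.sum_congr rfl fun t _ => by rw [hMapply q t]; ring
      rw [step, Finset.sum_add_distrib, ← Finset.mul_sum, ← Finset.mul_sum, hdiagsum q]
    have h1' : α * (transm G p * transm G p) + (1 - α) * (transm G q * transm G p)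
        ≤ transm G p * s p := by
      rw [e1]
      nlinarith [hXp]
    have h2' : transm G q * s q
        ≤ α * (transm G q * transm G q) + (1 - α) * (transm G p * transm G q) := by
      rw [e2]
      nlinarith [hXq]
    rw [hspq] at h1'
    have hTpq : transm G p ≤ transm G q := by
      by_contra hba
      push_neg at hba
      nlinarith [mul_le_mul_of_nonneg_right h1' hb.le,
        mul_le_mul_of_nonneg_right h2' ha.le,
        mul_pos (mul_pos ha hb) (sub_pos.mpr hba)]
    linarith [hp i, hq i, hp j, hq j, hTpq]
  · -- transmission regular implies equality
    intro hreg
    set p0 : Fin n := ⟨0, hn0⟩ with hp0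
    set r := transm G p0 with hr
    have hrpos : 0 < r := hT p0
    have hsr : ∀ i, s i = r := by
      intro i
      have hti : transm G i = r := hreg i p0
      have hX : ∑ t, (ddist G i t : ℝ) * transm G t = transm G i * r := by
        have e : transm G i * r = ∑ t, (ddist G i t : ℝ) * r := by
          rw [← Finset.sum_mul]
          rfl
        rw [e]
        exact Finset.sum_congr rfl fun t _ => by rw [hreg t p0]
      rw [hs i, hX, hti]
      field_simp
      ring
    have hSup : (⨆ i, s i) = r := by
      calc (⨆ i, s i) = ⨆ _ : Fin n, r := iSup_congr hsr
        _ = r := ciSup_const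
    rw [hSup]
    have hspec : ((r : ℂ)) ∈ spectrum ℂ ((Dalpha α G).map (fun x => (x : ℂ))) := by
      rw [spec_iff_eigen]
      refine ⟨fun _ => 1, ?_, ?_⟩
      · exact Function.ne_iff.mpr ⟨p0, one_ne_zero⟩
      · funext i
        simp only [Matrix.mulVec, dotProduct, Matrix.map_apply, Pi.smul_apply, smul_eq_mul,
          mul_one]
        have : ∑ j, Dalpha α G i j = r := by rw [hrowsum i]; exact hreg i p0
        rw [← this]
        push_cast
        rfl
    unfold mualpha specRad
    apply IsGreatest.csSup_eq
    constructor
    · exact ⟨(r : ℂ), hspec, by rw [Complex.norm_real, Real.norm_eq_abs, abs_of_pos hrpos]⟩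
    · rintro x ⟨μ, hμ, rfl⟩
      have hb := (key_bound hn0 (Dalpha α G) (transm G) s hT hM hMpos hrow hμ).1
      rw [hSup] at hb
      exact hb
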